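/- Let λ,μ ∈ P_{≥0} be dominant weights with λ−μ ∈ Q. Then for any 𝐤 ∈ ℕ[Φ]^W: (i) Π(λ+ρ_𝐤) ∩ Π(μ+ρ_𝐤) = Π(λ∧μ + ρ_𝐤), and (ii) Π^Q(λ+ρ_𝐤) ∩ Π^Q(μ+ρ_𝐤) = Π^Q(λ∧μ + ρ_𝐤). -/

import Mathlib

open RealInnerProductSpace Pointwise

/-- The covector `α^∨ := 2α/⟨α,α⟩` of a vector `α`. -/
noncomputable def corootOf {V : Type*} [NormedAddCommGroup V] [InnerProductSpace ℝ V]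
    (α : V) : V := (2 / ⟪α, α⟫) • α

/-- The reflection `s_α(u) := u - ⟨u,α^∨⟩α`. -/
noncomputable def rsReflect {V : Type*} [NormedAddCommGroup V] [InnerProductSpace ℝ V]
    (α u : V) : V := u - ⟪u, corootOf α⟫ • α

/-- An irreducible crystallographic reduced root system in a Euclidean space `V`,
together with a chosen base `α_1, …, α_n` of simple roots. -/
structure RootSystemData (V : Type*) [NormedAddCommGroup V] [InnerProductSpace ℝ V]
    (n : ℕ) where
  Φ : Set V
  finite : Φ.Finite
  nonzero : ∀ α ∈ Φ, α ≠ 0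
  spans : Submodule.span ℝ Φ = ⊤
  reflect_mem : ∀ α ∈ Φ, ∀ β ∈ Φ, rsReflect α β ∈ Φ
  reduced : ∀ α ∈ Φ, (Submodule.span ℝ {α} : Set V) ∩ Φ = {α, -α}
  crystal : ∀ α ∈ Φ, ∀ β ∈ Φ, ∃ z : ℤ, ⟪β, corootOf α⟫ = (z : ℝ)
  irred : ¬∃ Φ₁ Φ₂ : Set V, Φ₁.Nonempty ∧ Φ₂.Nonempty ∧ Φ₁ ∪ Φ₂ = Φ ∧
    Disjoint Φ₁ Φ₂ ∧ ∀ α ∈ Φ₁, ∀ β ∈ Φ₂, ⟪α, β⟫ = 0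
  simple : Fin n → V
  simple_mem : ∀ i, simple i ∈ Φ
  simple_indep : LinearIndependent ℝ simple
  simple_span : Submodule.span ℝ (Set.range simple) = ⊤
  root_combo : ∀ α ∈ Φ, (∃ c : Fin n → ℕ, α = ∑ i, (c i : ℝ) • simple i) ∨
    (∃ c : Fin n → ℕ, α = -∑ i, (c i : ℝ) • simple i)

namespace RootSystemData

variable {V : Type*} [NormedAddCommGroup V] [InnerProductSpace ℝ V] {n : ℕ}

/-- The set `Φ^+` of positive roots. -/
def Pos (R : RootSystemData V n) : Set V :=
  {α | α ∈ R.Φ ∧ ∃ c : Fin n → ℕ, α = ∑ i, (c i : ℝ) • R.simple i}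

/-- The Weyl group `W`, as the subgroup of linear automorphisms of `V` generated by
the reflections `s_α`, `α ∈ Φ`. -/
def weyl (R : RootSystemData V n) : Subgroup (V ≃ₗ[ℝ] V) :=
  Subgroup.closure {w | ∃ α ∈ R.Φ, ∀ u, w u = rsReflect α u}

/-- The Weyl group orbit `W(l)`. -/
def orbit (R : RootSystemData V n) (l : V) : Set V := {v | ∃ w ∈ R.weyl, v = w l}

/-- The permutohedron `Π(l) := ConvexHull W(l)`. -/
noncomputable def perm (R : RootSystemData V n) (l : V) : Set V := convexHull ℝ (R.orbit l)

/-- The root lattice `Q := Span_ℤ(Φ)`. -/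
def rootLattice (R : RootSystemData V n) : AddSubgroup V := AddSubgroup.closure R.Φ

/-- The coset `Q + l`. -/
def latticeCoset (R : RootSystemData V n) (l : V) : Set V := {v | v - l ∈ R.rootLattice}

/-- The discrete permutohedron `Π^Q(l) := Π(l) ∩ (Q + l)`. -/
noncomputable def permQ (R : RootSystemData V n) (l : V) : Set V :=
  R.perm l ∩ R.latticeCoset l

/-- The weight lattice `P`. -/
def weights (R : RootSystemData V n) : Set V :=
  {v | ∀ α ∈ R.Φ, ∃ z : ℤ, ⟪v, corootOf α⟫ = (z : ℝ)}

/-- A vector is dominant if it pairs nonnegatively with all simple coroots. -/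
def IsDomVec (R : RootSystemData V n) (v : V) : Prop :=
  ∀ i, 0 ≤ ⟪v, corootOf (R.simple i)⟫

/-- Dominant weights, i.e. elements of `P_{≥0}`. -/
def IsDominant (R : RootSystemData V n) (l : V) : Prop :=
  l ∈ R.weights ∧ R.IsDomVec l

/-- Root order: `μ ≤ l` iff `l − μ` is a nonnegative integer combination of simple roots. -/
def rootOrderLE (R : RootSystemData V n) (μ l : V) : Prop :=
  ∃ c : Fin n → ℕ, l - μ = ∑ i, (c i : ℝ) • R.simple i

/-- Membership in `ℕ[Φ]^W`: `W`-invariance of `k : Φ → ℕ`. -/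
def IsWInvariant (R : RootSystemData V n) (k : V → ℕ) : Prop :=
  ∀ w ∈ R.weyl, ∀ α ∈ R.Φ, k (w α) = k α

/-- Short roots: minimizers of the squared length. -/
def IsShort (R : RootSystemData V n) (α : V) : Prop :=
  α ∈ R.Φ ∧ ∀ β ∈ R.Φ, ⟪α, α⟫ ≤ ⟪β, β⟫

/-- Long roots: maximizers of the squared length. -/
def IsLong (R : RootSystemData V n) (α : V) : Prop :=
  α ∈ R.Φ ∧ ∀ β ∈ R.Φ, ⟪β, β⟫ ≤ ⟪α, α⟫

/-- Simply laced: all roots have the same length. -/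
def IsSimplyLaced (R : RootSystemData V n) : Prop :=
  ∀ α ∈ R.Φ, ∀ β ∈ R.Φ, ⟪α, α⟫ = ⟪β, β⟫

/-- `k ∈ ℕ[Φ]^W` is good if `Φ` is simply laced, or else `k` vanishing on short roots
implies it vanishes on long roots. -/
def IsGood (R : RootSystemData V n) (k : V → ℕ) : Prop :=
  R.IsSimplyLaced ∨ ((∀ α, R.IsShort α → k α = 0) → ∀ α, R.IsLong α → k α = 0)

/-- The symmetric interval-firing relation: `l → l + α` whenever
`⟨l + α/2, α^∨⟩ ∈ {−k(α), …, k(α)}`. -/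
def symFire (R : RootSystemData V n) (k : V → ℕ) (l m : V) : Prop :=
  ∃ α ∈ R.Pos, m = l + α ∧ ∃ z : ℤ,
    ⟪l + (2⁻¹ : ℝ) • α, corootOf α⟫ = (z : ℝ) ∧ -(k α : ℤ) ≤ z ∧ z ≤ (k α : ℤ)

/-- `ν` is the stabilization of `μ` for the symmetric interval-firing process. -/
def symStab (R : RootSystemData V n) (k : V → ℕ) (μ ν : V) : Prop :=
  Relation.ReflTransGen (R.symFire k) μ ν ∧ ∀ ξ, ¬ R.symFire k ν ξ

/-- The length of a Weyl group element: its number of inversions. -/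
noncomputable def len (R : RootSystemData V n) (w : V ≃ₗ[ℝ] V) : ℕ :=
  {α | α ∈ R.Pos ∧ w α ∉ R.Pos}.ncard

/-- `w` is the minimal length element of `W` such that `w⁻¹(l)` is dominant
(i.e. `w = w_l`). -/
def IsMinDomRep (R : RootSystemData V n) (l : V) (w : V ≃ₗ[ℝ] V) : Prop :=
  w ∈ R.weyl ∧ R.IsDomVec (w⁻¹ l) ∧
    ∀ w' ∈ R.weyl, R.IsDomVec (w'⁻¹ l) → R.len w ≤ R.len w'

/-- The fiber `(s^sym_𝐤)⁻¹(l)`: the set of weights whose symmetric interval-firing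
stabilization is `η_𝐤(l) = l + w_l(ρ_𝐤)`.  Here `ρk` is the vector `ρ_𝐤`. -/
def symFiber (R : RootSystemData V n) (k : V → ℕ) (ρk : V) (l : V) : Set V :=
  {μ | μ ∈ R.weights ∧ ∃ w, R.IsMinDomRep l w ∧ R.symStab k μ (l + w ρk)}

/-- The symmetric Ehrhart-like count `L^sym_l(𝐤)`. -/
noncomputable def symL (R : RootSystemData V n) (k : V → ℕ) (ρk : V) (l : V) : ℕ :=
  (R.symFiber k ρk l).ncard

/-- `I^{0,1}_l := {i : ⟨l, α_i^∨⟩ ∈ {0,1}}`. -/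
def I01 (R : RootSystemData V n) (l : V) : Set (Fin n) :=
  {i | ⟪l, corootOf (R.simple i)⟫ = 0 ∨ ⟪l, corootOf (R.simple i)⟫ = 1}

/-- The parabolic subgroup `W_I`. -/
def parabolic (R : RootSystemData V n) (I : Set (Fin n)) : Subgroup (V ≃ₗ[ℝ] V) :=
  Subgroup.closure {w | ∃ i ∈ I, ∀ u, w u = rsReflect (R.simple i) u}

/-- The parabolic sub-root system `Φ_I := Φ ∩ Span_ℝ{α_i : i ∈ I}`. -/
def parabolicRoots (R : RootSystemData V n) (I : Set (Fin n)) : Set V :=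
  R.Φ ∩ (Submodule.span ℝ (R.simple '' I) : Set V)

/-- The set `W^I` of minimal length representatives of the cosets of `W_I` in `W`. -/
noncomputable def minReps (R : RootSystemData V n) (I : Set (Fin n)) : Set (V ≃ₗ[ℝ] V) :=
  {w | w ∈ R.weyl ∧ ∀ w' ∈ R.weyl, w⁻¹ * w' ∈ R.parabolic I → R.len w ≤ R.len w'}

end RootSystemData

/-- The relative volume `rVol_Λ(X)` of a finite (linearly independent) set `X` with
respect to a lattice `Λ`: the number of `Λ`-points in the half-open parallelepiped
`Σ_{x ∈ X} [0, x)` (equivalently, the gcd of the maximal minors of the matrix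
expressing the elements of `X` in a basis of `Λ`). -/
noncomputable def rVol {V : Type*} [AddCommGroup V] [Module ℝ V]
    (Λ : AddSubgroup V) (X : Finset V) : ℕ :=
  {v : V | v ∈ Λ ∧ ∃ c : V → ℝ, (∀ x ∈ X, 0 ≤ c x ∧ c x < 1) ∧
    v = ∑ x ∈ X, c x • x}.ncard

namespace RootSystemData

variable {V : Type*} [NormedAddCommGroup V] [InnerProductSpace ℝ V]

lemma inner_coroot (α u : V) : ⟪u, corootOf α⟫ = 2 / ⟪α,α⟫ * ⟪u,α⟫ := by
  simp [corootOf, real_inner_smul_right]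

lemma inner_coroot_self (α : V) (h : (⟪α,α⟫:ℝ) ≠ 0) : ⟪α, corootOf α⟫ = 2 := by
  rw [inner_coroot]; field_simp

lemma coroot_zero_of (α : V) (h : (⟪α,α⟫:ℝ) = 0) : corootOf α = 0 := by
  simp [corootOf, h]
  exact (inner_self_eq_zero (𝕜 := ℝ)).mp h

noncomputable def reflLM (α : V) : V →ₗ[ℝ] V where
  toFun u := rsReflect α u
  map_add' u v := by
    simp only [rsReflect, inner_add_left, add_smul]; abel
  map_smul' r u := by
    simp only [rsReflect, real_inner_smul_left, RingHom.id_apply, smul_sub, smul_smul]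

lemma reflect_involutive (α : V) : Function.Involutive (rsReflect α) := by
  intro u
  by_cases h : (⟪α,α⟫:ℝ) = 0
  · simp [rsReflect, coroot_zero_of α h]
  · have h2 := inner_coroot_self α h
    simp only [rsReflect, inner_sub_left, real_inner_smul_left, h2]
    have : (⟪u, corootOf α⟫ - ⟪u, corootOf α⟫ * 2) = -⟪u, corootOf α⟫ := by ring
    rw [this, neg_smul, sub_neg_eq_add, sub_add_cancel]

lemma reflect_inner (α u v : V) : ⟪rsReflect α u, rsReflect α v⟫ = ⟪u,v⟫ := by
  by_cases h : (⟪α,α⟫:ℝ) = 0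
  · simp [rsReflect, coroot_zero_of α h]
  · simp only [rsReflect, inner_sub_left, inner_sub_right, real_inner_smul_left,
      real_inner_smul_right, inner_coroot]
    field_simp
    ring_nf
    rw [real_inner_comm α v]
    ring

noncomputable def reflLin (α : V) : V ≃ₗ[ℝ] V :=
  LinearEquiv.ofInvolutive (reflLM α) (reflect_involutive α)

@[simp] lemma reflLin_apply (α u : V) : reflLin α u = rsReflect α u := rfl

lemma reflect_self (α : V) : rsReflect α α = -α := by
  by_cases h : (⟪α,α⟫:ℝ) = 0
  · have : α = 0 := by
      have := (inner_self_eq_zero (𝕜 := ℝ)).mp h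
      exact this
    simp [rsReflect, this]
  · rw [rsReflect, inner_coroot_self α h, two_smul]; abel

section Weyl

variable {n : ℕ} (R : RootSystemData V n)

lemma root_inner_pos {α : V} (hα : α ∈ R.Φ) : (0:ℝ) < ⟪α,α⟫ := by
  have h0 : (⟪α,α⟫:ℝ) ≠ 0 := fun h => R.nonzero α hα ((inner_self_eq_zero (𝕜:=ℝ)).mp h)
  exact lt_of_le_of_ne real_inner_self_nonneg (Ne.symm h0)

lemma root_inner_ne {α : V} (hα : α ∈ R.Φ) : (⟪α,α⟫:ℝ) ≠ 0 :=
  ne_of_gt (R.root_inner_pos hα)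

lemma reflLin_mem {α : V} (hα : α ∈ R.Φ) : reflLin α ∈ R.weyl :=
  Subgroup.subset_closure ⟨α, hα, fun _ => rfl⟩

lemma weyl_inner {w : V ≃ₗ[ℝ] V} (hw : w ∈ R.weyl) (u v : V) : ⟪w u, w v⟫ = ⟪u,v⟫ := by
  revert u v
  refine Subgroup.closure_induction
    (p := fun g _ => ∀ u v : V, ⟪g u, g v⟫ = ⟪u,v⟫) ?_ ?_ ?_ ?_ hw
  · rintro x ⟨α, _, hx⟩ u v
    rw [hx, hx]; exact reflect_inner α u v
  · intro u v; rfl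
  · intro x y _ _ hx hy u v
    have : ∀ z, (x * y) z = x (y z) := fun _ => rfl
    rw [this, this, hx, hy]
  · intro x _ hx u v
    have h1 : x (x⁻¹ u) = u := x.apply_symm_apply u
    have h2 : x (x⁻¹ v) = v := x.apply_symm_apply v
    have := hx (x⁻¹ u) (x⁻¹ v)
    rw [h1, h2] at this
    exact this.symm

lemma weyl_inner_right {w : V ≃ₗ[ℝ] V} (hw : w ∈ R.weyl) (u v : V) :
    ⟪u, w v⟫ = ⟪w⁻¹ u, v⟫ := by
  conv_lhs => rw [← w.apply_symm_apply u]
  exact R.weyl_inner hw _ v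

lemma weyl_inner_left {w : V ≃ₗ[ℝ] V} (hw : w ∈ R.weyl) (u v : V) :
    ⟪w u, v⟫ = ⟪u, w⁻¹ v⟫ := by
  conv_lhs => rw [← w.apply_symm_apply v]
  exact R.weyl_inner hw u _

lemma weyl_image {w : V ≃ₗ[ℝ] V} (hw : w ∈ R.weyl) : w '' R.Φ = R.Φ := by
  refine Subgroup.closure_induction
    (p := fun (g : V ≃ₗ[ℝ] V) _ => ⇑g '' R.Φ = R.Φ) ?_ ?_ ?_ ?_ hw
  · rintro x ⟨α, hα, hx⟩
    have hsub : x '' R.Φ ⊆ R.Φ := by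
      rintro _ ⟨β, hβ, rfl⟩
      rw [hx]; exact R.reflect_mem α hα β hβ
    refine Set.eq_of_subset_of_ncard_le hsub ?_ R.finite
    rw [Set.ncard_image_of_injective _ x.injective]
  · simp
  · intro x y _ _ hx hy
    have hc : ⇑(x * y) = ⇑x ∘ ⇑y := rfl
    rw [hc, Set.image_comp, hy, hx]
  · intro x _ hx
    conv_lhs => rw [← hx]
    rw [← Set.image_comp]
    have hid : (⇑x⁻¹ ∘ ⇑x) = id := by
      funext z; exact x.symm_apply_apply z
    rw [hid, Set.image_id]

lemma weyl_root {w : V ≃ₗ[ℝ] V} (hw : w ∈ R.weyl) {α : V} (hα : α ∈ R.Φ) :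
    w α ∈ R.Φ := by
  rw [← R.weyl_image hw]; exact ⟨α, hα, rfl⟩

lemma weyl_finite : Finite R.weyl := by
  have : Finite R.Φ := R.finite.to_subtype
  let f : R.weyl → (R.Φ → R.Φ) := fun w a => ⟨w.1 a.1, R.weyl_root w.2 a.2⟩
  have hf : Function.Injective f := by
    intro w1 w2 h
    have key : ∀ v : V, w1.1 v = w2.1 v := by
      intro v
      have hv : v ∈ Submodule.span ℝ R.Φ := by rw [R.spans]; trivial
      induction hv using Submodule.span_induction with
      | mem x hx => exact congrArg Subtype.val (congrFun h ⟨x, hx⟩)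
      | zero => simp
      | add x y _ _ hx hy => rw [map_add, map_add, hx, hy]
      | smul c x _ hx => rw [map_smul, map_smul, hx]
    exact Subtype.ext (LinearEquiv.ext key)
  exact Finite.of_injective f hf

lemma orbit_finite (l : V) : (R.orbit l).Finite := by
  have : Finite R.weyl := R.weyl_finite
  have horb : R.orbit l = Set.range (fun w : R.weyl => w.1 l) := by
    ext v
    constructor
    · rintro ⟨w, hw, rfl⟩; exact ⟨⟨w, hw⟩, rfl⟩
    · rintro ⟨⟨w, hw⟩, rfl⟩; exact ⟨w, hw, rfl⟩
  rw [horb]; exact Set.finite_range _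

end Weyl

section Coords

variable {n : ℕ} (R : RootSystemData V n)

noncomputable def B : Module.Basis (Fin n) ℝ V :=
  Module.Basis.mk R.simple_indep (by rw [R.simple_span])

@[simp] lemma B_apply (i : Fin n) : R.B i = R.simple i := Module.Basis.mk_apply _ _ i

noncomputable def coord (i : Fin n) (v : V) : ℝ := R.B.coord i v

lemma coord_add (i : Fin n) (u v : V) : R.coord i (u + v) = R.coord i u + R.coord i v :=
  map_add _ u v

lemma coord_sub (i : Fin n) (u v : V) : R.coord i (u - v) = R.coord i u - R.coord i v :=
  map_sub _ u v

lemma coord_neg (i : Fin n) (u : V) : R.coord i (-u) = -R.coord i u := map_neg _ u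

lemma coord_smul (i : Fin n) (r : ℝ) (u : V) : R.coord i (r • u) = r * R.coord i u :=
  map_smul _ r u

lemma coord_simple (i j : Fin n) :
    R.coord j (R.simple i) = if i = j then 1 else 0 := by
  rw [coord, ← B_apply, Module.Basis.coord_apply, Module.Basis.repr_self, Finsupp.single_apply]

lemma coord_sum (f : Fin n → ℝ) (j : Fin n) :
    R.coord j (∑ i, f i • R.simple i) = f j := by
  rw [coord, map_sum]
  have h : ∀ i ∈ Finset.univ, R.B.coord j (f i • R.simple i)
      = if i = j then f i else 0 := by
    intro i _
    rw [map_smul, ← coord, coord_simple, smul_eq_mul]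
    by_cases h : i = j <;> simp [h]
  rw [Finset.sum_congr rfl h]
  simp

lemma coord_expand (v : V) : ∑ i, R.coord i v • R.simple i = v := by
  have := R.B.sum_repr v
  simp only [B_apply] at this
  simpa [coord, Module.Basis.coord_apply] using this

lemma eq_zero_of_coords (v : V) (h : ∀ i, R.coord i v = 0) : v = 0 := by
  rw [← R.coord_expand v]
  simp [h]

lemma neg_root {α : V} (hα : α ∈ R.Φ) : -α ∈ R.Φ := by
  have := R.reflect_mem α hα α hα
  rwa [reflect_self] at this

lemma pos_coord_nat {α : V} (hα : α ∈ R.Pos) : ∃ c : Fin n → ℕ, ∀ j, R.coord j α = c j := by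
  obtain ⟨-, c, rfl⟩ := hα
  exact ⟨c, fun j => R.coord_sum _ j⟩

lemma pos_coord_nonneg {α : V} (hα : α ∈ R.Pos) (j : Fin n) : 0 ≤ R.coord j α := by
  obtain ⟨c, hc⟩ := R.pos_coord_nat hα
  rw [hc]; positivity

lemma mem_pos_of_coords {α : V} (hα : α ∈ R.Φ) (h : ∀ j, 0 ≤ R.coord j α) :
    α ∈ R.Pos := by
  rcases R.root_combo α hα with hc | ⟨c, hc⟩
  · exact ⟨hα, hc⟩
  · exfalso
    apply R.nonzero α hα
    apply R.eq_zero_of_coords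
    intro i
    have : R.coord i α = -(c i : ℝ) := by
      rw [hc, coord_neg, coord_sum]
    have h2 := h i
    rw [this] at h2 ⊢
    have : (0:ℝ) ≤ (c i : ℝ) := by positivity
    linarith

lemma root_coord_int {α : V} (hα : α ∈ R.Φ) (j : Fin n) :
    ∃ z : ℤ, R.coord j α = z := by
  rcases R.root_combo α hα with ⟨c, hc⟩ | ⟨c, hc⟩
  · exact ⟨c j, by rw [hc, coord_sum]; push_cast; ring⟩
  · exact ⟨-(c j), by rw [hc, coord_neg, coord_sum]; push_cast; ring⟩

lemma neg_not_pos {α : V} (hα : α ∈ R.Pos) : -α ∉ R.Pos := by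
  intro hn
  apply R.nonzero α hα.1
  apply R.eq_zero_of_coords
  intro i
  have h1 := R.pos_coord_nonneg hα i
  have h2 := R.pos_coord_nonneg hn i
  rw [coord_neg] at h2
  linarith

lemma root_pos_or_neg {α : V} (hα : α ∈ R.Φ) : α ∈ R.Pos ∨ -α ∈ R.Pos := by
  rcases R.root_combo α hα with ⟨c, hc⟩ | ⟨c, hc⟩
  · exact Or.inl ⟨hα, c, hc⟩
  · exact Or.inr ⟨R.neg_root hα, c, by rw [hc]; abel⟩

lemma neg_pos_of_not_pos {α : V} (hα : α ∈ R.Φ) (h : α ∉ R.Pos) : -α ∈ R.Pos :=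
  (R.root_pos_or_neg hα).resolve_left h

lemma simple_pos (i : Fin n) : R.simple i ∈ R.Pos := by
  refine ⟨R.simple_mem i, fun j => if i = j then 1 else 0, ?_⟩
  rw [Finset.sum_congr rfl (g := fun j => if i = j then R.simple i else 0)]
  · rw [Finset.sum_ite_eq]; simp
  · intro j _
    by_cases h : i = j <;> simp [h]

end Coords

section Sdom

variable {n : ℕ}

lemma findim (R : RootSystemData V n) : FiniteDimensional ℝ V :=
  Module.Finite.of_basis R.B

variable (R : RootSystemData V n)

noncomputable def sdom : V :=
  haveI := R.findim
  haveI : CompleteSpace V := FiniteDimensional.complete ℝ V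
  (InnerProductSpace.toDual ℝ V).symm
    (LinearMap.toContinuousLinearMap (∑ i, R.B.coord i))

lemma inner_sdom (v : V) : ⟪R.sdom, v⟫ = ∑ i, R.coord i v := by
  haveI := R.findim
  haveI : CompleteSpace V := FiniteDimensional.complete ℝ V
  rw [sdom, InnerProductSpace.toDual_symm_apply]
  simp [coord]

lemma inner_sdom' (v : V) : ⟪v, R.sdom⟫ = ∑ i, R.coord i v := by
  rw [real_inner_comm, inner_sdom]

lemma pos_inner_sdom {α : V} (hα : α ∈ R.Pos) : 0 < ⟪α, R.sdom⟫ := by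
  obtain ⟨c, hc⟩ := R.pos_coord_nat hα
  rw [inner_sdom']
  rw [Finset.sum_congr rfl (fun j _ => hc j)]
  rw [← Nat.cast_sum]
  have hne : ∑ j, c j ≠ 0 := by
    intro h0
    apply R.nonzero α hα.1
    apply R.eq_zero_of_coords
    intro i
    rw [hc i]
    have := Finset.sum_eq_zero_iff.mp h0 i (Finset.mem_univ i)
    simp [this]
  exact_mod_cast Nat.pos_of_ne_zero hne

lemma not_pos_inner_sdom {α : V} (hα : α ∈ R.Φ) (h : α ∉ R.Pos) : ⟪α, R.sdom⟫ < 0 := by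
  have := R.pos_inner_sdom (R.neg_pos_of_not_pos hα h)
  rw [inner_neg_left] at this
  linarith

end Sdom

section Obtuse

variable {n : ℕ} (R : RootSystemData V n)

lemma simple_obtuse {i j : Fin n} (hij : i ≠ j) : ⟪R.simple i, R.simple j⟫ ≤ 0 := by
  by_contra hcon
  push_neg at hcon
  obtain ⟨z, hz⟩ := R.crystal (R.simple i) (R.simple_mem i) (R.simple j) (R.simple_mem j)
  have hzpos : 0 < (z:ℝ) := by
    rw [← hz, inner_coroot]
    have ht := R.root_inner_pos (R.simple_mem i)
    have hc : (0:ℝ) < ⟪R.simple j, R.simple i⟫ := by rwa [real_inner_comm]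
    positivity
  set β := rsReflect (R.simple i) (R.simple j) with hβdef
  have hβ : β ∈ R.Φ := R.reflect_mem _ (R.simple_mem i) _ (R.simple_mem j)
  have hβeq : β = R.simple j - (z:ℝ) • R.simple i := by
    rw [hβdef, rsReflect, hz]
  have hci : R.coord i β = -(z:ℝ) := by
    rw [hβeq, coord_sub, coord_smul, coord_simple, coord_simple]
    simp [hij, hij.symm]
  have hcj : R.coord j β = 1 := by
    rw [hβeq, coord_sub, coord_smul, coord_simple, coord_simple]
    simp [hij, hij.symm]
  rcases R.root_pos_or_neg hβ with hp | hp
  · have := R.pos_coord_nonneg hp i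
    rw [hci] at this; linarith
  · have := R.pos_coord_nonneg hp j
    rw [coord_neg, hcj] at this; linarith

lemma simple_coroot_obtuse {i j : Fin n} (hij : i ≠ j) :
    ⟪R.simple i, corootOf (R.simple j)⟫ ≤ 0 := by
  rw [inner_coroot]
  have ht := R.root_inner_pos (R.simple_mem j)
  have h := R.simple_obtuse hij
  have h2 : (0:ℝ) < 2 / ⟪R.simple j, R.simple j⟫ := by positivity
  nlinarith

lemma pos_span_simple {i : Fin n} {α : V} (hα : α ∈ R.Pos)
    (h : ∀ j, j ≠ i → R.coord j α = 0) : α = R.simple i := by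
  have hsp : α ∈ (Submodule.span ℝ {R.simple i} : Set V) := by
    rw [SetLike.mem_coe, Submodule.mem_span_singleton]
    refine ⟨R.coord i α, ?_⟩
    conv_rhs => rw [← R.coord_expand α]
    rw [Finset.sum_eq_single i]
    · intro b _ hb; rw [h b hb, zero_smul]
    · intro hb; exact absurd (Finset.mem_univ i) hb
  have hmem : α ∈ ({R.simple i, -R.simple i} : Set V) := by
    rw [← R.reduced (R.simple i) (R.simple_mem i)]
    exact ⟨hsp, hα.1⟩
  rcases hmem with h1 | h1
  · exact h1
  · exfalso
    apply R.neg_not_pos (R.simple_pos i)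
    rw [← h1]
    exact hα

lemma exists_other_coord {i : Fin n} {α : V} (hα : α ∈ R.Pos)
    (hne : α ≠ R.simple i) : ∃ j, j ≠ i ∧ 0 < R.coord j α := by
  by_contra hcon
  push_neg at hcon
  apply hne
  apply R.pos_span_simple hα
  intro j hj
  have h1 := hcon j hj
  have h2 := R.pos_coord_nonneg hα j
  linarith

lemma reflect_simple_pos (i : Fin n) {α : V} (hα : α ∈ R.Pos)
    (hne : α ≠ R.simple i) : rsReflect (R.simple i) α ∈ R.Pos := by
  obtain ⟨j, hji, hj⟩ := R.exists_other_coord hα hne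
  set β := rsReflect (R.simple i) α with hβdef
  have hβ : β ∈ R.Φ := R.reflect_mem _ (R.simple_mem i) _ hα.1
  have hcj : R.coord j β = R.coord j α := by
    rw [hβdef, rsReflect, coord_sub, coord_smul, coord_simple]
    simp [Ne.symm hji]
  rcases R.root_pos_or_neg hβ with hp | hp
  · exact hp
  · exfalso
    have := R.pos_coord_nonneg hp j
    rw [coord_neg, hcj] at this
    linarith

lemma eq_simple_of_reflect_not_pos (i : Fin n) {α : V} (hα : α ∈ R.Pos)
    (h : rsReflect (R.simple i) α ∉ R.Pos) : α = R.simple i := by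
  by_contra hne
  exact h (R.reflect_simple_pos i hα hne)

lemma reflect_simple_ne (i : Fin n) {α : V} (hα : α ∈ R.Pos)
    (hne : α ≠ R.simple i) : rsReflect (R.simple i) α ≠ R.simple i := by
  intro h
  have := congrArg (rsReflect (R.simple i)) h
  rw [reflect_involutive, reflect_self] at this
  rw [this] at hα
  exact R.neg_not_pos (R.simple_pos i) hα

end Obtuse

section Words

variable {n : ℕ} (R : RootSystemData V n)

lemma reflLin_neg (α : V) : reflLin (-α) = reflLin α := by
  refine LinearEquiv.ext fun u => ?_
  show rsReflect (-α) u = rsReflect α u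
  have hco : corootOf (-α) = -corootOf α := by
    rw [corootOf, corootOf, inner_neg_neg, smul_neg]
  rw [rsReflect, rsReflect, hco, inner_neg_right, smul_neg, neg_smul, neg_neg]

lemma reflLin_sq (α : V) : reflLin α * reflLin α = 1 :=
  LinearEquiv.ext fun u => reflect_involutive α u

lemma reflLin_inv (α : V) : (reflLin α)⁻¹ = reflLin α :=
  inv_eq_of_mul_eq_one_left (reflLin_sq α)

lemma coroot_map {w : V ≃ₗ[ℝ] V} (hw : w ∈ R.weyl) (α : V) :
    corootOf (w α) = w (corootOf α) := by
  rw [corootOf, corootOf, R.weyl_inner hw, map_smul]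

lemma reflLin_conj {w : V ≃ₗ[ℝ] V} (hw : w ∈ R.weyl) (α : V) :
    reflLin (w α) = w * reflLin α * w⁻¹ := by
  refine LinearEquiv.ext fun u => ?_
  show rsReflect (w α) u = w (rsReflect α (w⁻¹ u))
  have h1 : w (w⁻¹ u) = u := w.apply_symm_apply u
  rw [rsReflect, rsReflect, R.coroot_map hw, map_sub, map_smul, h1,
    R.weyl_inner_right hw]

noncomputable def prodList (L : List (Fin n)) : V ≃ₗ[ℝ] V :=
  (L.map (fun i => reflLin (R.simple i))).prod

@[simp] lemma prodList_nil : R.prodList [] = 1 := rfl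

lemma prodList_cons (i : Fin n) (L : List (Fin n)) :
    R.prodList (i :: L) = reflLin (R.simple i) * R.prodList L := by
  simp [prodList]

lemma prodList_append (L M : List (Fin n)) :
    R.prodList (L ++ M) = R.prodList L * R.prodList M := by
  simp [prodList]

lemma prodList_mem (L : List (Fin n)) : R.prodList L ∈ R.weyl := by
  induction L with
  | nil => exact Subgroup.one_mem _
  | cons i L ih =>
    rw [prodList_cons]
    exact Subgroup.mul_mem _ (R.reflLin_mem (R.simple_mem i)) ih

lemma prodList_inv (L : List (Fin n)) : (R.prodList L)⁻¹ = R.prodList L.reverse := by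
  induction L with
  | nil => simp
  | cons i L ih =>
    rw [prodList_cons, mul_inv_rev, ih, reflLin_inv, List.reverse_cons,
      prodList_append]
    simp [prodList]

lemma exists_pos_inner {α : V} (hα : α ∈ R.Pos) :
    ∃ i, (0:ℝ) < ⟪α, R.simple i⟫ := by
  by_contra hcon
  push_neg at hcon
  obtain ⟨c, hc⟩ := hα.2
  have hpos := R.root_inner_pos hα.1
  have : ⟪α, α⟫ ≤ (0:ℝ) := by
    conv_lhs => rw [show ⟪α,α⟫ = ⟪α, ∑ i, (c i:ℝ) • R.simple i⟫ by rw [← hc]]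
    rw [inner_sum]
    apply Finset.sum_nonpos
    intro i _
    rw [real_inner_smul_right]
    have h1 := hcon i
    have h2 : (0:ℝ) ≤ c i := by positivity
    nlinarith
  linarith

lemma pos_word_aux : ∀ (N : ℕ) (α : V), α ∈ R.Pos →
    ∀ c : Fin n → ℕ, α = ∑ i, (c i : ℝ) • R.simple i → (∑ i, c i) < N →
    ∃ (L : List (Fin n)) (m : Fin n), α = R.prodList L (R.simple m) := by
  intro N
  induction N with
  | zero => intro α _ c _ h; exact absurd h (Nat.not_lt_zero _)
  | succ N ih =>
    intro α hα c hc hN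
    by_cases hsimp : ∃ i, α = R.simple i
    · obtain ⟨i, hi⟩ := hsimp
      exact ⟨[], i, by simpa using hi⟩
    · push_neg at hsimp
      obtain ⟨i, hi⟩ := R.exists_pos_inner hα
      obtain ⟨z, hz⟩ := R.crystal (R.simple i) (R.simple_mem i) α hα.1
      have hzpos : (0:ℝ) < z := by
        rw [← hz, inner_coroot]
        have ht := R.root_inner_pos (R.simple_mem i)
        positivity
      have hz1 : (1:ℝ) ≤ z := by exact_mod_cast (by exact_mod_cast hzpos : (0:ℤ) < z)
      set β := rsReflect (R.simple i) α with hβdef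
      have hβpos : β ∈ R.Pos := R.reflect_simple_pos i hα (hsimp i)
      have hβeq : β = α - (z:ℝ) • R.simple i := by rw [hβdef, rsReflect, hz]
      obtain ⟨c', hc'⟩ := R.pos_coord_nat hβpos
      -- sum of coords of β equals sum of c minus z
      have hsum : ((∑ j, c' j : ℕ) : ℝ) = ((∑ j, c j : ℕ) : ℝ) - z := by
        push_cast
        have h1 : ∀ j, (c' j : ℝ) = R.coord j β := fun j => (hc' j).symm
        have h2 : ∀ j, R.coord j β = (c j : ℝ) - z * R.coord j (R.simple i) := by
          intro j
          rw [hβeq, coord_sub, coord_smul]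
          congr 1
          rw [hc, coord_sum]
        rw [Finset.sum_congr rfl (fun j _ => (h1 j).trans (h2 j))]
        rw [Finset.sum_sub_distrib, ← Finset.mul_sum]
        have h3 : ∑ j, R.coord j (R.simple i) = 1 := by
          have : ∀ j, R.coord j (R.simple i) = if i = j then (1:ℝ) else 0 :=
            fun j => R.coord_simple i j
          rw [Finset.sum_congr rfl (fun j _ => this j)]
          simp
        rw [h3, mul_one]
      have hlt : (∑ j, c' j) < N := by
        have : ((∑ j, c' j : ℕ) : ℝ) + 1 ≤ ((∑ j, c j : ℕ) : ℝ) := by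
          rw [hsum]; linarith
        have hnat : (∑ j, c' j) + 1 ≤ ∑ j, c j := by exact_mod_cast this
        omega
      obtain ⟨L, m, hLm⟩ := ih β hβpos c' (by
        rw [← R.coord_expand β]
        exact Finset.sum_congr rfl (fun j _ => by rw [hc' j])) hlt
      refine ⟨i :: L, m, ?_⟩
      rw [prodList_cons]
      have : α = rsReflect (R.simple i) β := by
        rw [hβdef, reflect_involutive]
      rw [this, hLm]
      rfl

lemma pos_word {α : V} (hα : α ∈ R.Pos) :
    ∃ (L : List (Fin n)) (m : Fin n), α = R.prodList L (R.simple m) := by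
  obtain ⟨c, hc⟩ := hα.2
  exact R.pos_word_aux ((∑ i, c i) + 1) α hα c hc (Nat.lt_succ_self _)

lemma mem_word {w : V ≃ₗ[ℝ] V} (hw : w ∈ R.weyl) :
    ∃ L : List (Fin n), w = R.prodList L := by
  refine Subgroup.closure_induction
    (p := fun (g : V ≃ₗ[ℝ] V) _ => ∃ L : List (Fin n), g = R.prodList L) ?_ ?_ ?_ ?_ hw
  · rintro x ⟨α, hα, hx⟩
    have hxr : x = reflLin α := LinearEquiv.ext fun u => hx u
    have key : ∀ β, β ∈ R.Pos → ∃ L : List (Fin n), reflLin β = R.prodList L := by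
      intro β hβ
      obtain ⟨L, m, hLm⟩ := R.pos_word hβ
      refine ⟨L ++ [m] ++ L.reverse, ?_⟩
      rw [hLm, R.reflLin_conj (R.prodList_mem L), R.prodList_inv]
      simp [prodList, mul_assoc]
    rcases R.root_pos_or_neg hα with hp | hp
    · rw [hxr]; exact key α hp
    · rw [hxr, ← reflLin_neg]; exact key (-α) hp
  · exact ⟨[], rfl⟩
  · rintro x y _ _ ⟨L, rfl⟩ ⟨M, rfl⟩
    exact ⟨L ++ M, (R.prodList_append L M).symm⟩
  · rintro x _ ⟨L, rfl⟩
    exact ⟨L.reverse, R.prodList_inv L⟩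

end Words

section Exchange

variable {n : ℕ} (R : RootSystemData V n)

lemma exchange : ∀ (L : List (Fin n)) (j : Fin n),
    R.prodList L (R.simple j) ∉ R.Pos →
    ∃ M : List (Fin n), M.length + 1 = L.length ∧
      R.prodList L * reflLin (R.simple j) = R.prodList M := by
  intro L
  induction L with
  | nil =>
    intro j hj
    exact absurd (R.simple_pos j) (by simpa using hj)
  | cons i L ih =>
    intro j hj
    have hcons : R.prodList (i :: L) (R.simple j)
        = rsReflect (R.simple i) (R.prodList L (R.simple j)) := by
      rw [prodList_cons]; rfl
    by_cases hγ : R.prodList L (R.simple j) ∈ R.Pos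
    · -- the positive root becomes negative exactly at step i
      have hune : R.prodList L (R.simple j) = R.simple i := by
        apply R.eq_simple_of_reflect_not_pos i hγ
        rw [← hcons]; exact hj
      refine ⟨L, rfl, ?_⟩
      have hconj : reflLin (R.simple i)
          = R.prodList L * reflLin (R.simple j) * (R.prodList L)⁻¹ := by
        rw [← hune, R.reflLin_conj (R.prodList_mem L)]
      rw [prodList_cons, hconj]
      calc R.prodList L * reflLin (R.simple j) * (R.prodList L)⁻¹ * R.prodList L *
            reflLin (R.simple j)
          = R.prodList L * (reflLin (R.simple j) * reflLin (R.simple j)) := by group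
        _ = R.prodList L := by rw [reflLin_sq, mul_one]
    · obtain ⟨M, hlen, heq⟩ := ih j hγ
      refine ⟨i :: M, by simp [hlen.symm], ?_⟩
      rw [prodList_cons, prodList_cons, mul_assoc, heq]

lemma pos_preserving_aux : ∀ (N : ℕ) (L : List (Fin n)), L.length < N →
    (∀ α ∈ R.Pos, R.prodList L α ∈ R.Pos) → R.prodList L = 1 := by
  intro N
  induction N with
  | zero => intro L h; omega
  | succ N ih =>
    intro L hlen h
    rcases List.eq_nil_or_concat L with rfl | ⟨M, j, rfl⟩
    · rfl
    · rw [List.concat_eq_append] at h hlen ⊢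
      have hMj : R.prodList (M ++ [j]) = R.prodList M * reflLin (R.simple j) := by
        rw [prodList_append]; simp [prodList]
      have hM : R.prodList M = R.prodList (M ++ [j]) * reflLin (R.simple j) := by
        rw [hMj, mul_assoc, reflLin_sq, mul_one]
      have key : R.prodList M (R.simple j) ∉ R.Pos := by
        have : R.prodList M (R.simple j)
            = R.prodList (M ++ [j]) (rsReflect (R.simple j) (R.simple j)) := by
          rw [hM]; rfl
        rw [this, reflect_self, map_neg]
        exact R.neg_not_pos (h (R.simple j) (R.simple_pos j))
      obtain ⟨M', hlen', heq⟩ := R.exchange M j key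
      have hw : R.prodList (M ++ [j]) = R.prodList M' := by rw [hMj, heq]
      rw [hw]
      apply ih M'
      · have h1 : (M ++ [j]).length = M.length + 1 := by simp
        omega
      · intro α hα
        rw [← hw]
        exact h α hα

lemma pos_preserving_eq_one {w : V ≃ₗ[ℝ] V} (hw : w ∈ R.weyl)
    (h : ∀ α ∈ R.Pos, w α ∈ R.Pos) : w = 1 := by
  obtain ⟨L, rfl⟩ := R.mem_word hw
  exact R.pos_preserving_aux (L.length + 1) L (Nat.lt_succ_self _) h

end Exchange

section Dominance

variable {n : ℕ} (R : RootSystemData V n)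

def invSet (w : V ≃ₗ[ℝ] V) : Set V := {α | α ∈ R.Pos ∧ w α ∉ R.Pos}

lemma invSet_finite (w : V ≃ₗ[ℝ] V) : (R.invSet w).Finite :=
  R.finite.subset (fun α hα => hα.1.1)

lemma exists_simple_inv {w : V ≃ₗ[ℝ] V} (hw : w ∈ R.weyl)
    (hne : (R.invSet w).Nonempty) : ∃ j, w (R.simple j) ∉ R.Pos := by
  by_contra hcon
  push_neg at hcon
  obtain ⟨α, hαpos, hαneg⟩ := hne
  apply hαneg
  apply R.mem_pos_of_coords (R.weyl_root hw hαpos.1)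
  intro k
  obtain ⟨c, hc⟩ := hαpos.2
  have hwα : w α = ∑ i, (c i : ℝ) • w (R.simple i) := by
    rw [hc, map_sum]
    exact Finset.sum_congr rfl (fun i _ => by rw [map_smul])
  rw [hwα]
  have hck : R.coord k (∑ i, (c i : ℝ) • w (R.simple i))
      = ∑ i, (c i : ℝ) * R.coord k (w (R.simple i)) := by
    show R.B.coord k _ = _
    rw [map_sum]
    exact Finset.sum_congr rfl (fun i _ => by rw [map_smul]; rfl)
  rw [hck]
  apply Finset.sum_nonneg
  intro i _
  have h1 : (0:ℝ) ≤ c i := by positivity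
  have h2 := R.pos_coord_nonneg (hcon i) k
  positivity

lemma weyl_pres_pos {w : V ≃ₗ[ℝ] V} (hw : w ∈ R.weyl)
    (h : R.invSet w = ∅) : w = 1 := by
  apply R.pos_preserving_eq_one hw
  intro α hα
  by_contra hn
  rw [Set.eq_empty_iff_forall_notMem] at h
  exact h α ⟨hα, hn⟩

lemma neg_weyl_simple_pos {w : V ≃ₗ[ℝ] V} (hw : w ∈ R.weyl) {j : Fin n}
    (hj : w (R.simple j) ∉ R.Pos) : -(w (R.simple j)) ∈ R.Pos :=
  R.neg_pos_of_not_pos (R.weyl_root hw (R.simple_mem j)) hj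

lemma dom_aux : ∀ (N : ℕ) (w : V ≃ₗ[ℝ] V), w ∈ R.weyl → (R.invSet w).ncard < N →
    ∀ l, R.IsDomVec l → ∀ i, 0 ≤ R.coord i (l - w l) := by
  intro N
  induction N with
  | zero => intro w _ h; omega
  | succ N ih =>
    intro w hw hcard l hl i
    rcases Set.eq_empty_or_nonempty (R.invSet w) with hemp | hne
    · rw [R.weyl_pres_pos hw hemp]
      show 0 ≤ R.coord i (l - l)
      rw [sub_self, coord, map_zero]
    · obtain ⟨j, hj⟩ := R.exists_simple_inv hw hne
      set w' := w * reflLin (R.simple j) with hw'def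
      have hw' : w' ∈ R.weyl := Subgroup.mul_mem _ hw (R.reflLin_mem (R.simple_mem j))
      have hset : R.invSet w'
          = (fun u => rsReflect (R.simple j) u) '' (R.invSet w \ {R.simple j}) := by
        ext α
        constructor
        · rintro ⟨hαpos, hαneg⟩
          have hαne : α ≠ R.simple j := by
            rintro rfl
            apply hαneg
            show w (rsReflect (R.simple j) (R.simple j)) ∈ R.Pos
            rw [reflect_self, map_neg]
            exact R.neg_weyl_simple_pos hw hj
          refine ⟨rsReflect (R.simple j) α,
            ⟨⟨R.reflect_simple_pos j hαpos hαne, hαneg⟩, ?_⟩, reflect_involutive _ α⟩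
          intro hmem
          rw [Set.mem_singleton_iff] at hmem
          exact R.reflect_simple_ne j hαpos hαne hmem
        · rintro ⟨β, ⟨⟨hβpos, hβneg⟩, hβne⟩, rfl⟩
          rw [Set.mem_singleton_iff] at hβne
          refine ⟨R.reflect_simple_pos j hβpos hβne, ?_⟩
          show w (rsReflect (R.simple j) (rsReflect (R.simple j) β)) ∉ R.Pos
          rw [reflect_involutive]
          exact hβneg
      have hcard' : (R.invSet w').ncard + 1 = (R.invSet w).ncard := by
        rw [hset]
        rw [Set.ncard_image_of_injective _ (reflect_involutive (R.simple j)).injective]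
        exact Set.ncard_diff_singleton_add_one ⟨R.simple_pos j, hj⟩
          (R.invSet_finite w)
      have hIH := ih w' hw' (by omega) l hl i
      have hkey : l - w l = (l - w' l)
          + ⟪l, corootOf (R.simple j)⟫ • (-(w (R.simple j))) := by
        have h1 : w' l = w l - ⟪l, corootOf (R.simple j)⟫ • (w (R.simple j)) := by
          show w (rsReflect (R.simple j) l) = _
          rw [rsReflect, map_sub, map_smul]
        rw [h1, smul_neg]
        abel
      rw [hkey, coord_add, coord_smul]
      have h3 : 0 ≤ ⟪l, corootOf (R.simple j)⟫ := hl j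
      have h4 := R.pos_coord_nonneg (R.neg_weyl_simple_pos hw hj) i
      have := mul_nonneg h3 h4
      linarith

lemma dom_sub_cone {w : V ≃ₗ[ℝ] V} (hw : w ∈ R.weyl) {l : V} (hl : R.IsDomVec l)
    (i : Fin n) : 0 ≤ R.coord i (l - w l) :=
  R.dom_aux ((R.invSet w).ncard + 1) w hw (Nat.lt_succ_self _) l hl i

end Dominance

section Rado

variable {n : ℕ} (R : RootSystemData V n)

def radoSet (l : V) : Set V := {v | ∀ w ∈ R.weyl, ∀ i, 0 ≤ R.coord i (l - w v)}

lemma dom_inner_simple {y : V} (hy : R.IsDomVec y) (i : Fin n) :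
    0 ≤ ⟪R.simple i, y⟫ := by
  have h := hy i
  rw [inner_coroot] at h
  have ht := R.root_inner_pos (R.simple_mem i)
  have h2 : (0:ℝ) < 2 / ⟪R.simple i, R.simple i⟫ := by positivity
  rw [real_inner_comm]
  nlinarith

lemma orbit_subset_rado {l : V} (hl : R.IsDomVec l) : R.orbit l ⊆ R.radoSet l := by
  rintro v ⟨u, hu, rfl⟩ w hw i
  exact R.dom_sub_cone (Subgroup.mul_mem _ hw hu) hl i

lemma rado_convex (l : V) : Convex ℝ (R.radoSet l) := by
  intro x hx y hy a b ha hb hab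
  intro w hw i
  have hkey : l - w (a•x + b•y) = a•(l - w x) + b•(l - w y) := by
    conv_lhs => rw [show l = (a+b) • l by rw [hab, one_smul]]
    rw [map_add, map_smul, map_smul]
    module
  rw [hkey, coord_add, coord_smul, coord_smul]
  have h1 := hx w hw i
  have h2 := hy w hw i
  positivity

lemma perm_subset_rado {l : V} (hl : R.IsDomVec l) : R.perm l ⊆ R.radoSet l :=
  convexHull_min (R.orbit_subset_rado hl) (R.rado_convex l)

lemma simple_inner_sdom (i : Fin n) : ⟪R.simple i, R.sdom⟫ = 1 := by
  rw [inner_sdom']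
  rw [Finset.sum_congr rfl (fun j _ => R.coord_simple i j)]
  simp

lemma exists_dom_rep (v : V) : ∃ u : V ≃ₗ[ℝ] V, u ∈ R.weyl ∧ R.IsDomVec (u v) := by
  haveI := R.weyl_finite
  haveI : Nonempty R.weyl := ⟨1, Subgroup.one_mem _⟩
  obtain ⟨u₀, hmax⟩ := Finite.exists_max (fun u : R.weyl => ⟪u.1 v, R.sdom⟫)
  refine ⟨u₀.1, u₀.2, ?_⟩
  intro i
  have hs := hmax ⟨reflLin (R.simple i) * u₀.1,
    Subgroup.mul_mem _ (R.reflLin_mem (R.simple_mem i)) u₀.2⟩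
  have heq : (reflLin (R.simple i) * u₀.1) v = rsReflect (R.simple i) (u₀.1 v) := rfl
  rw [heq, rsReflect, inner_sub_left, real_inner_smul_left, R.simple_inner_sdom,
    mul_one] at hs
  linarith

lemma rado_subset_perm {l : V} (hl : R.IsDomVec l) : R.radoSet l ⊆ R.perm l := by
  intro v hv
  by_contra hout
  haveI := R.findim
  haveI : CompleteSpace V := FiniteDimensional.complete ℝ V
  have hcl : IsClosed (R.perm l) := ((R.orbit_finite l).isCompact_convexHull ℝ).isClosed
  have hcv : Convex ℝ (R.perm l) := convex_convexHull ℝ _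
  obtain ⟨f, c, hfs, hfv⟩ := geometric_hahn_banach_closed_point hcv hcl hout
  set y := (InnerProductSpace.toDual ℝ V).symm f with hy
  have hyf : ∀ x : V, ⟪y, x⟫ = f x := fun x => by
    rw [hy, InnerProductSpace.toDual_symm_apply]
  obtain ⟨u, hu, huy⟩ := R.exists_dom_rep y
  have h1 : ⟪v, y⟫ ≤ ⟪l, u y⟫ := by
    have hx : ∀ i, 0 ≤ R.coord i (l - u v) := fun i => hv u hu i
    have hpos : 0 ≤ ⟪l - u v, u y⟫ := by
      conv_rhs => rw [show l - u v = ∑ i, R.coord i (l - u v) • R.simple i from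
        (R.coord_expand _).symm]
      rw [sum_inner]
      apply Finset.sum_nonneg
      intro i _
      rw [real_inner_smul_left]
      exact mul_nonneg (hx i) (R.dom_inner_simple huy i)
    have h2 : ⟪u v, u y⟫ = ⟪v, y⟫ := R.weyl_inner hu v y
    rw [inner_sub_left] at hpos
    linarith
  have h2 : ⟪l, u y⟫ = ⟪u⁻¹ l, y⟫ := R.weyl_inner_right hu l y
  have h3 : u⁻¹ l ∈ R.perm l := subset_convexHull ℝ _ ⟨u⁻¹, Subgroup.inv_mem _ hu, rfl⟩
  have h4 := hfs _ h3
  have h5 : ⟪y, u⁻¹ l⟫ = f (u⁻¹ l) := hyf _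
  have h6 : ⟪y, v⟫ = f v := hyf v
  rw [real_inner_comm] at h5 h6
  linarith

lemma perm_eq_rado {l : V} (hl : R.IsDomVec l) : R.perm l = R.radoSet l :=
  Set.Subset.antisymm (R.perm_subset_rado hl) (R.rado_subset_perm hl)

end Rado

section Lattice

variable {n : ℕ} (R : RootSystemData V n)

lemma lattice_coord_int {x : V} (hx : x ∈ R.rootLattice) (i : Fin n) :
    ∃ z : ℤ, R.coord i x = z := by
  refine AddSubgroup.closure_induction
    (p := fun (g : V) _ => ∃ z : ℤ, R.coord i g = z) ?_ ?_ ?_ ?_ hx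
  · intro α hα; exact R.root_coord_int hα i
  · exact ⟨0, by rw [coord, map_zero]; simp⟩
  · rintro x y _ _ ⟨z1, hz1⟩ ⟨z2, hz2⟩
    exact ⟨z1 + z2, by rw [coord_add, hz1, hz2]; push_cast; ring⟩
  · rintro x _ ⟨z, hz⟩
    exact ⟨-z, by rw [coord_neg, hz]; push_cast; ring⟩

lemma int_combo_mem (b : Fin n → ℤ) :
    (∑ i, ((b i : ℝ)) • R.simple i) ∈ R.rootLattice := by
  apply AddSubgroup.sum_mem
  intro i _
  rw [Int.cast_smul_eq_zsmul]
  exact AddSubgroup.zsmul_mem _ (AddSubgroup.subset_closure (R.simple_mem i)) _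

lemma min_dom_one (a a' : Fin n → ℝ) (hdl : R.IsDomVec (∑ i, a i • R.simple i))
    (j : Fin n) (h : a j ≤ a' j) :
    0 ≤ ⟪∑ i, min (a i) (a' i) • R.simple i, corootOf (R.simple j)⟫ := by
  have hsplit : (∑ i, min (a i) (a' i) • R.simple i)
      = (∑ i, a i • R.simple i) + ∑ i, (min (a i) (a' i) - a i) • R.simple i := by
    rw [← Finset.sum_add_distrib]
    apply Finset.sum_congr rfl
    intro i _
    rw [← add_smul]
    congr 1
    ring
  rw [hsplit, inner_add_left]
  have h2 : 0 ≤ ⟪∑ i, (min (a i) (a' i) - a i) • R.simple i, corootOf (R.simple j)⟫ := by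
    rw [sum_inner]
    apply Finset.sum_nonneg
    intro i _
    rw [real_inner_smul_left]
    by_cases hij : i = j
    · subst hij
      rw [min_eq_left h, sub_self, zero_mul]
    · have t1 : min (a i) (a' i) - a i ≤ 0 := by
        have := min_le_left (a i) (a' i); linarith
      exact mul_nonneg_of_nonpos_of_nonpos t1 (R.simple_coroot_obtuse hij)
  have h1 := hdl j
  linarith

lemma min_dom (a a' : Fin n → ℝ) (hdl : R.IsDomVec (∑ i, a i • R.simple i))
    (hdμ : R.IsDomVec (∑ i, a' i • R.simple i)) :
    R.IsDomVec (∑ i, min (a i) (a' i) • R.simple i) := by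
  intro j
  rcases le_total (a j) (a' j) with h | h
  · exact R.min_dom_one a a' hdl j h
  · have hc : (∑ i, min (a i) (a' i) • R.simple i)
        = ∑ i, min (a' i) (a i) • R.simple i := by
      apply Finset.sum_congr rfl
      intro i _
      rw [min_comm]
    rw [hc]
    exact R.min_dom_one a' a hdμ j h

end Lattice

end RootSystemData

/-- Proposition 3.6: intersections of (discrete) permutohedra
`Π(λ+ρ_𝐤)` are given by the meet `λ∧μ` in root order.  Here `a`, `a'` are the
coordinates of `λ`, `μ` in the basis of simple roots, so that
`λ∧μ = Σ min(a_i, a'_i) α_i`, and `ρk` is the vector `ρ_𝐤`. -/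
theorem perm_intersections {V : Type*} [NormedAddCommGroup V] [InnerProductSpace ℝ V]
    {n : ℕ} (R : RootSystemData V n) (l μ : V)
    (hl : R.IsDominant l) (hμ : R.IsDominant μ) (hQ : l - μ ∈ R.rootLattice)
    (k : V → ℕ) (hk : R.IsWInvariant k)
    (ρk : V) (hρk : ∀ i, ⟪ρk, corootOf (R.simple i)⟫ = (k (R.simple i) : ℝ))
    (a a' : Fin n → ℝ)
    (ha : l = ∑ i, a i • R.simple i) (ha' : μ = ∑ i, a' i • R.simple i) :
    R.perm (l + ρk) ∩ R.perm (μ + ρk)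
        = R.perm ((∑ i, min (a i) (a' i) • R.simple i) + ρk) ∧
      R.permQ (l + ρk) ∩ R.permQ (μ + ρk)
        = R.permQ ((∑ i, min (a i) (a' i) • R.simple i) + ρk) := by
  classical
  set m : V := ∑ i, min (a i) (a' i) • R.simple i with hm
  have hldv : R.IsDomVec l := hl.2
  have hμdv : R.IsDomVec μ := hμ.2
  have hρdv : R.IsDomVec ρk := fun i => by rw [hρk i]; positivity
  have hadd : ∀ {x : V}, R.IsDomVec x → R.IsDomVec (x + ρk) := by
    intro x hx i
    rw [inner_add_left]
    have h1 := hx i; have h2 := hρdv i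
    linarith
  have hmdv : R.IsDomVec m :=
    R.min_dom a a' (by rw [← ha]; exact hldv) (by rw [← ha']; exact hμdv)
  have hcoord : ∀ (x : V) (b : Fin n → ℝ), x = ∑ i, b i • R.simple i →
      ∀ (v : V) (i : Fin n), R.coord i (x + ρk - v) = b i + R.coord i (ρk - v) := by
    intro x b hx v i
    have he : x + ρk - v = x + (ρk - v) := by abel
    rw [he, RootSystemData.coord_add, hx, RootSystemData.coord_sum]
  have hperm : R.perm (l + ρk) ∩ R.perm (μ + ρk) = R.perm (m + ρk) := by
    rw [R.perm_eq_rado (hadd hldv), R.perm_eq_rado (hadd hμdv), R.perm_eq_rado (hadd hmdv)]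
    ext v
    simp only [Set.mem_inter_iff, RootSystemData.radoSet, Set.mem_setOf_eq]
    constructor
    · rintro ⟨h1, h2⟩ w hw i
      have e1 := h1 w hw i
      have e2 := h2 w hw i
      rw [hcoord l a ha (w v) i] at e1
      rw [hcoord μ a' ha' (w v) i] at e2
      rw [hcoord m (fun i => min (a i) (a' i)) hm (w v) i]
      rcases le_total (a i) (a' i) with hh | hh
      · rw [min_eq_left hh]; exact e1
      · rw [min_eq_right hh]; exact e2
    · intro h
      constructor <;> intro w hw i <;> have := h w hw i <;>
        rw [hcoord m (fun i => min (a i) (a' i)) hm (w v) i] at this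
      · rw [hcoord l a ha (w v) i]
        have hmin : min (a i) (a' i) ≤ a i := min_le_left _ _
        linarith
      · rw [hcoord μ a' ha' (w v) i]
        have hmin : min (a i) (a' i) ≤ a' i := min_le_right _ _
        linarith
  choose zf hzf using fun i => R.lattice_coord_int hQ i
  have hz : ∀ i, (a i) - (a' i) = (zf i : ℝ) := by
    intro i
    have h1 : R.coord i (l - μ) = a i - a' i := by
      rw [RootSystemData.coord_sub, ha, ha', RootSystemData.coord_sum,
        RootSystemData.coord_sum]
    rw [← h1]
    exact hzf i
  have hlm : l - m ∈ R.rootLattice := by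
    have hexp : l - m = ∑ i, ((max (zf i) 0 : ℤ) : ℝ) • R.simple i := by
      rw [ha, hm, ← Finset.sum_sub_distrib]
      apply Finset.sum_congr rfl
      intro i _
      rw [← sub_smul]
      congr 1
      rcases le_total (a i) (a' i) with hh | hh
      · rw [min_eq_left hh]
        have hle : ((zf i : ℤ) : ℝ) ≤ 0 := by rw [← hz i]; linarith
        have hle' : (zf i) ≤ 0 := by exact_mod_cast hle
        rw [max_eq_right hle', sub_self]
        simp
      · rw [min_eq_right hh]
        have hge : (0:ℝ) ≤ ((zf i : ℤ) : ℝ) := by rw [← hz i]; linarith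
        have hge' : (0:ℤ) ≤ zf i := by exact_mod_cast hge
        rw [max_eq_left hge', ← hz i]
    rw [hexp]
    exact R.int_combo_mem _
  have hμm : μ - m ∈ R.rootLattice := by
    have he : μ - m = (l - m) - (l - μ) := by abel
    rw [he]
    exact AddSubgroup.sub_mem _ hlm hQ
  have hcos : ∀ x : V, x - m ∈ R.rootLattice →
      R.latticeCoset (x + ρk) = R.latticeCoset (m + ρk) := by
    intro x hxm
    ext v
    simp only [RootSystemData.latticeCoset, Set.mem_setOf_eq]
    constructor
    · intro h
      have h2 := AddSubgroup.add_mem _ h hxm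
      have he : v - (x + ρk) + (x - m) = v - (m + ρk) := by abel
      rwa [he] at h2
    · intro h
      have h2 := AddSubgroup.sub_mem _ h hxm
      have he : v - (m + ρk) - (x - m) = v - (x + ρk) := by abel
      rwa [he] at h2
  refine ⟨hperm, ?_⟩
  show R.perm (l + ρk) ∩ R.latticeCoset (l + ρk) ∩
      (R.perm (μ + ρk) ∩ R.latticeCoset (μ + ρk))
      = R.perm (m + ρk) ∩ R.latticeCoset (m + ρk)
  rw [hcos l hlm, hcos μ hμm, ← hperm]
  ext v
  simp only [Set.mem_inter_iff]
  tauto
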